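/- arXiv:1412.3512 — 2 statements merged into one kernel-verified Lean document; each statement's English description precedes it below -/
import Mathlib

section
/- Let φ be the involution on S_n(132) defined by φ(empty) = empty and φ(α ⊖ (β ⊕ 1)) = φ(β) ⊖ (φ(α) ⊕ 1). For every π ∈ S_n(132), the number of right-to-left maxima of π equals the number of right-to-left minima of φ(π), and the number of right-to-left minima of π equals the number of right-to-left maxima of φ(π). -/
open Equiv Finset

/-- π avoids the classical pattern 132. -/
def avoids132 {n : ℕ} (π : Equiv.Perm (Fin n)) : Prop :=
  ¬ ∃ i j k : Fin n, i < j ∧ j < k ∧ π i < π k ∧ π k < π j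

/-- π avoids the classical pattern 231. -/
def avoids231 {n : ℕ} (π : Equiv.Perm (Fin n)) : Prop :=
  ¬ ∃ i j k : Fin n, i < j ∧ j < k ∧ π k < π i ∧ π i < π j

/-- π avoids the classical pattern 312. -/
def avoids312 {n : ℕ} (π : Equiv.Perm (Fin n)) : Prop :=
  ¬ ∃ i j k : Fin n, i < j ∧ j < k ∧ π j < π k ∧ π k < π i

/-- Direct sum α ⊕ β of permutations. -/
def dsum {a b : ℕ} (α : Equiv.Perm (Fin a)) (β : Equiv.Perm (Fin b)) :
    Equiv.Perm (Fin (a + b)) :=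
  finSumFinEquiv.symm.trans ((Equiv.sumCongr α β).trans finSumFinEquiv)

/-- Skew sum α ⊖ β of permutations. -/
def ssum {a b : ℕ} (α : Equiv.Perm (Fin a)) (β : Equiv.Perm (Fin b)) :
    Equiv.Perm (Fin (a + b)) :=
  finSumFinEquiv.symm.trans ((Equiv.sumCongr α β).trans
    ((Equiv.sumComm (Fin a) (Fin b)).trans
      (finSumFinEquiv.trans (finCongr (Nat.add_comm b a)))))

/-- Transport a permutation of Fin m along an equality m = n. -/
def castPerm {m n : ℕ} (h : m = n) (π : Equiv.Perm (Fin m)) : Equiv.Perm (Fin n) :=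
  Equiv.permCongr (finCongr h) π

/-- Number of descents. -/
def des {n : ℕ} (π : Equiv.Perm (Fin n)) : ℕ :=
  (Finset.univ.filter (fun p : Fin n × Fin n =>
    (p.1 : ℕ) + 1 = (p.2 : ℕ) ∧ π p.2 < π p.1)).card

/-- Number of occurrences of the vincular pattern 2-\underline{31}. -/
def occ2_31 {n : ℕ} (π : Equiv.Perm (Fin n)) : ℕ :=
  (Finset.univ.filter (fun p : Fin n × Fin n × Fin n =>
    p.1 < p.2.1 ∧ (p.2.1 : ℕ) + 1 = (p.2.2 : ℕ) ∧
      π p.2.2 < π p.1 ∧ π p.1 < π p.2.1)).card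

/-- Number of occurrences of the vincular pattern 2-\underline{13}. -/
def occ2_13 {n : ℕ} (π : Equiv.Perm (Fin n)) : ℕ :=
  (Finset.univ.filter (fun p : Fin n × Fin n × Fin n =>
    p.1 < p.2.1 ∧ (p.2.1 : ℕ) + 1 = (p.2.2 : ℕ) ∧
      π p.2.1 < π p.1 ∧ π p.1 < π p.2.2)).card

/-- Number of occurrences of the vincular pattern \underline{21}-3. -/
def occ21_3 {n : ℕ} (π : Equiv.Perm (Fin n)) : ℕ :=
  (Finset.univ.filter (fun p : Fin n × Fin n × Fin n =>
    (p.1 : ℕ) + 1 = (p.2.1 : ℕ) ∧ p.2.1 < p.2.2 ∧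
      π p.2.1 < π p.1 ∧ π p.1 < π p.2.2)).card

/-- Number of occurrences of the vincular pattern \underline{23}-1. -/
def occ23_1 {n : ℕ} (π : Equiv.Perm (Fin n)) : ℕ :=
  (Finset.univ.filter (fun p : Fin n × Fin n × Fin n =>
    (p.1 : ℕ) + 1 = (p.2.1 : ℕ) ∧ p.2.1 < p.2.2 ∧
      π p.2.2 < π p.1 ∧ π p.1 < π p.2.1)).card

/-- Number of occurrences of the vincular pattern 3-\underline{12}. -/
def occ3_12 {n : ℕ} (π : Equiv.Perm (Fin n)) : ℕ :=
  (Finset.univ.filter (fun p : Fin n × Fin n × Fin n =>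
    p.1 < p.2.1 ∧ (p.2.1 : ℕ) + 1 = (p.2.2 : ℕ) ∧
      π p.2.1 < π p.2.2 ∧ π p.2.2 < π p.1)).card

/-- Number of occurrences of the vincular pattern \underline{31}-2. -/
def occ31_2 {n : ℕ} (π : Equiv.Perm (Fin n)) : ℕ :=
  (Finset.univ.filter (fun p : Fin n × Fin n × Fin n =>
    (p.1 : ℕ) + 1 = (p.2.1 : ℕ) ∧ p.2.1 < p.2.2 ∧
      π p.2.1 < π p.2.2 ∧ π p.2.2 < π p.1)).card

/-- Number of right-to-left maxima. -/
def rlmax {n : ℕ} (π : Equiv.Perm (Fin n)) : ℕ :=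
  (Finset.univ.filter (fun i : Fin n => ∀ j, i < j → π j < π i)).card

/-- Number of right-to-left minima. -/
def rlmin {n : ℕ} (π : Equiv.Perm (Fin n)) : ℕ :=
  (Finset.univ.filter (fun i : Fin n => ∀ j, i < j → π i < π j)).card

/-- Occurrences of the pattern 1-2 ending at the last position: indices i < n-1 with π_i < π_{n-1} (plus the anchor). -/
def stat12end {n : ℕ} (π : Equiv.Perm (Fin n)) : ℕ :=
  (Finset.univ.filter (fun p : Fin n × Fin n =>
    p.1 < p.2 ∧ (p.2 : ℕ) + 1 = n ∧ π p.1 < π p.2)).card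

/-- Occurrences of the pattern 2-1 ending at the last position. -/
def stat21end {n : ℕ} (π : Equiv.Perm (Fin n)) : ℕ :=
  (Finset.univ.filter (fun p : Fin n × Fin n =>
    p.1 < p.2 ∧ (p.2 : ℕ) + 1 = n ∧ π p.2 < π p.1)).card

-- value lemmas
lemma aux_symm_lt {a b : ℕ} (i : Fin (a+b)) (h : (i:ℕ) < a) :
    finSumFinEquiv.symm i = Sum.inl (⟨i, h⟩ : Fin a) := by
  rw [Equiv.symm_apply_eq]; ext; simp

lemma aux_symm_ge {a b : ℕ} (i : Fin (a+b)) (h : a ≤ (i:ℕ)) :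
    finSumFinEquiv.symm i = Sum.inr (⟨(i:ℕ) - a, by omega⟩ : Fin b) := by
  rw [Equiv.symm_apply_eq]; ext; simp; omega

lemma ssum_val_lt {a b : ℕ} (α : Equiv.Perm (Fin a)) (γ : Equiv.Perm (Fin b))
    (i : Fin (a+b)) (h : (i:ℕ) < a) :
    ((ssum α γ) i : ℕ) = b + α ⟨i, h⟩ := by
  simp [ssum, aux_symm_lt i h, Nat.add_comm]

lemma ssum_val_ge {a b : ℕ} (α : Equiv.Perm (Fin a)) (γ : Equiv.Perm (Fin b))
    (i : Fin (a+b)) (h : a ≤ (i:ℕ)) :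
    ((ssum α γ) i : ℕ) = γ ⟨(i:ℕ) - a, by omega⟩ := by
  simp [ssum, aux_symm_ge i h]

lemma dsum_val_lt {a b : ℕ} (α : Equiv.Perm (Fin a)) (γ : Equiv.Perm (Fin b))
    (i : Fin (a+b)) (h : (i:ℕ) < a) :
    ((dsum α γ) i : ℕ) = α ⟨i, h⟩ := by
  simp [dsum, aux_symm_lt i h]

lemma dsum_val_ge {a b : ℕ} (α : Equiv.Perm (Fin a)) (γ : Equiv.Perm (Fin b))
    (i : Fin (a+b)) (h : a ≤ (i:ℕ)) :
    ((dsum α γ) i : ℕ) = a + γ ⟨(i:ℕ) - a, by omega⟩ := by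
  simp [dsum, aux_symm_ge i h]

lemma castPerm_rfl {m : ℕ} (π : Equiv.Perm (Fin m)) : castPerm rfl π = π := by
  ext i; simp [castPerm]

lemma castPerm_val {m n : ℕ} (h : m = n) (π : Equiv.Perm (Fin m)) (i : Fin n) :
    ((castPerm h π) i : ℕ) = (π ⟨i, by omega⟩ : ℕ) := by
  subst h; rw [castPerm_rfl]

lemma rlmax_castPerm {m n : ℕ} (h : m = n) (π : Equiv.Perm (Fin m)) :
    rlmax (castPerm h π) = rlmax π := by
  subst h; rw [castPerm_rfl]

lemma rlmin_castPerm {m n : ℕ} (h : m = n) (π : Equiv.Perm (Fin m)) :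
    rlmin (castPerm h π) = rlmin π := by
  subst h; rw [castPerm_rfl]

-- value facts for π = ssum α (dsum β 1)
section vals
variable {a b : ℕ} (α : Equiv.Perm (Fin a)) (β : Equiv.Perm (Fin b))

lemma pv1 (i : Fin (a+(b+1))) (h : (i:ℕ) < a) :
    ((ssum α (dsum β (1 : Equiv.Perm (Fin 1)))) i : ℕ) = (b+1) + α ⟨i, h⟩ :=
  ssum_val_lt α _ i h

lemma pvsmall (i : Fin (a+(b+1))) (h : a ≤ (i:ℕ)) :
    ((ssum α (dsum β (1 : Equiv.Perm (Fin 1)))) i : ℕ) ≤ b := by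
  rw [ssum_val_ge α _ i h]
  exact Nat.lt_succ_iff.mp (Fin.is_lt _)

lemma pv2 (i : Fin (a+(b+1))) (h1 : a ≤ (i:ℕ)) (h2 : (i:ℕ) < a+b) :
    ((ssum α (dsum β (1 : Equiv.Perm (Fin 1)))) i : ℕ) = β ⟨(i:ℕ)-a, by omega⟩ := by
  rw [ssum_val_ge α _ i h1,
    dsum_val_lt β (1 : Equiv.Perm (Fin 1)) ⟨(i:ℕ)-a, by omega⟩ (by simp; omega)]

lemma pv3 : ((ssum α (dsum β (1 : Equiv.Perm (Fin 1)))) ⟨a+b, by omega⟩ : ℕ) = b := by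
  rw [ssum_val_ge α _ _ (by simp),
    dsum_val_ge β (1 : Equiv.Perm (Fin 1)) ⟨(a+b)-a, by omega⟩ (by simp)]
  simp

end vals



lemma card_filter_val_lt {n a : ℕ} (h : a < n) :
    (Finset.univ.filter (fun i : Fin n => (i:ℕ) < a)).card = a := by
  have : (Finset.univ.filter (fun i : Fin n => (i:ℕ) < a)) = Finset.Iio (⟨a, h⟩ : Fin n) := by
    ext i; simp [Fin.lt_def]
  rw [this, Fin.card_Iio]

lemma card_filter_val_le {n : ℕ} (i : Fin n) :
    (Finset.univ.filter (fun j : Fin n => (j:ℕ) ≤ (i:ℕ))).card = (i:ℕ) + 1 := by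
  have : (Finset.univ.filter (fun j : Fin n => (j:ℕ) ≤ (i:ℕ))) = Finset.Iic i := by
    ext j; simp only [mem_filter, mem_univ, true_and, Finset.mem_Iic, Fin.le_def]
  rw [this, Fin.card_Iic]

lemma card_filter_val_gt {n k : ℕ} (h : k < n) :
    (Finset.univ.filter (fun v : Fin n => k < (v:ℕ))).card = n - 1 - k := by
  have : (Finset.univ.filter (fun v : Fin n => k < (v:ℕ))) = Finset.Ioi (⟨k, h⟩ : Fin n) := by
    ext v; simp [Fin.lt_def]
  rw [this, Fin.card_Ioi]

lemma card_filter_perm {n : ℕ} (π : Equiv.Perm (Fin n)) (p : Fin n → Prop) [DecidablePred p] :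
    (Finset.univ.filter (fun i => p (π i))).card = (Finset.univ.filter p).card := by
  have : (Finset.univ.filter (fun i => p (π i)))
      = (Finset.univ.filter p).map π.symm.toEmbedding := by
    ext i
    simp only [mem_filter, mem_univ, true_and, mem_map, Equiv.coe_toEmbedding]
    constructor
    · intro h; exact ⟨π i, h, π.symm_apply_apply i⟩
    · rintro ⟨v, hv, rfl⟩; simpa using hv
  rw [this, Finset.card_map]



lemma rlmax_ssum {a b : ℕ} (α : Equiv.Perm (Fin a)) (β : Equiv.Perm (Fin b)) :
    rlmax (ssum α (dsum β (1 : Equiv.Perm (Fin 1)))) = rlmax α + 1 := by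
  classical
  set π := ssum α (dsum β (1 : Equiv.Perm (Fin 1))) with hπdef
  have hset : (Finset.univ.filter (fun i : Fin (a+(b+1)) => ∀ j, i < j → π j < π i))
      = insert (⟨a+b, by omega⟩ : Fin (a+(b+1)))
        ((Finset.univ.filter (fun x : Fin a => ∀ l, x < l → α l < α x)).map
          (Fin.castLEEmb (by omega))) := by
    ext i
    simp only [mem_filter, mem_univ, true_and, mem_insert, mem_map, Fin.castLEEmb_apply]
    constructor
    · intro hP
      rcases lt_trichotomy ((i:ℕ)) a with hia | hia | hia
      · right
        refine ⟨⟨i, hia⟩, ?_, by ext; simp⟩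
        intro l hl
        have hj : i < (⟨(l:ℕ), by omega⟩ : Fin (a+(b+1))) := by
          simp [Fin.lt_def]; exact hl
        have := hP _ hj
        rw [Fin.lt_def] at this ⊢
        rw [pv1 α β _ (l.isLt), pv1 α β _ hia] at this
        simpa using this
      · -- i.val = a : cannot be a rl-max unless a+b = a i.e. b=0... even then last is value b
        rcases Nat.lt_or_ge ((i:ℕ)) (a+b) with hib | hib
        · exfalso
          have hj : i < (⟨a+b, by omega⟩ : Fin (a+(b+1))) := by simp [Fin.lt_def]; omega
          have h2 := hP _ hj
          rw [Fin.lt_def, pv3 α β, pv2 α β i (by omega) hib] at h2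
          exact absurd h2 (by simpa using (β ⟨(i:ℕ)-a, by omega⟩).isLt.not_gt.imp id |>.elim (fun _ => (Fin.is_lt _).not_gt h2))
        · left; ext; simp; omega
      · rcases Nat.lt_or_ge ((i:ℕ)) (a+b) with hib | hib
        · exfalso
          have hj : i < (⟨a+b, by omega⟩ : Fin (a+(b+1))) := by simp [Fin.lt_def]; omega
          have h2 := hP _ hj
          rw [Fin.lt_def, pv3 α β, pv2 α β i (by omega) hib] at h2
          exact (Fin.is_lt _).not_gt h2
        · left; ext; simp; omega
    · rintro (rfl | ⟨x, hQ, rfl⟩)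
      · intro j hj
        rw [Fin.lt_def] at hj
        exfalso
        have := j.isLt
        simp at hj
        omega
      · intro j hj
        rw [Fin.lt_def] at hj ⊢
        simp only [Fin.coe_castLE] at hj
        rcases Nat.lt_or_ge ((j:ℕ)) a with hja | hja
        · rw [pv1 α β j hja, pv1 α β _ (by simpa using x.isLt)]
          have := hQ ⟨(j:ℕ), hja⟩ (by rwa [Fin.lt_def])
          rw [Fin.lt_def] at this
          have hx : (⟨((Fin.castLE (by omega : a ≤ a+(b+1)) x) : ℕ), by simpa using x.isLt⟩ : Fin a) = x := by
            ext; simp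
          rw [hx]
          omega
        · have h1 := pvsmall α β j hja
          rw [← hπdef] at h1
          rw [pv1 α β (Fin.castLE (by omega) x) (by simpa using x.isLt)]
          omega
  rw [rlmax, hset, Finset.card_insert_of_notMem, Finset.card_map, rlmax]
  simp only [mem_map, Fin.castLEEmb_apply, not_exists]
  intro x hx
  have : ((Fin.castLE (by omega : a ≤ a+(b+1)) x) : ℕ) = a + b := by rw [hx.2]
  simp at this
  omega



def midEmb (a b : ℕ) : Fin b ↪ Fin (a+(b+1)) :=
  ⟨fun x => ⟨a + x, by omega⟩, fun x y h => by
    apply Fin.ext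
    have := congrArg Fin.val h
    simpa using this⟩

lemma midEmb_val {a b : ℕ} (x : Fin b) : ((midEmb a b x : Fin (a+(b+1))) : ℕ) = a + x := rfl

lemma rlmin_ssum {a b : ℕ} (α : Equiv.Perm (Fin a)) (β : Equiv.Perm (Fin b)) :
    rlmin (ssum α (dsum β (1 : Equiv.Perm (Fin 1)))) = rlmin β + 1 := by
  classical
  set π := ssum α (dsum β (1 : Equiv.Perm (Fin 1))) with hπdef
  have hπemb : ∀ x : Fin b, (π (midEmb a b x) : ℕ) = (β x : ℕ) := by
    intro x
    rw [pv2 α β (midEmb a b x) (by rw [midEmb_val]; omega) (by rw [midEmb_val]; omega)]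
    congr 2
    apply Fin.ext
    show ((midEmb a b x : Fin (a+(b+1))) : ℕ) - a = (x:ℕ)
    rw [midEmb_val]
    omega
  have hset : (Finset.univ.filter (fun i : Fin (a+(b+1)) => ∀ j, i < j → π i < π j))
      = insert (⟨a+b, by omega⟩ : Fin (a+(b+1)))
        ((Finset.univ.filter (fun x : Fin b => ∀ l, x < l → β x < β l)).map (midEmb a b)) := by
    ext i
    simp only [mem_filter, mem_univ, true_and, mem_insert, mem_map]
    constructor
    · intro hP
      rcases Nat.lt_or_ge ((i:ℕ)) a with hia | hia
      · exfalso
        have hj : i < (⟨a+b, by omega⟩ : Fin (a+(b+1))) := by simp [Fin.lt_def]; omega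
        have h2 := hP _ hj
        rw [Fin.lt_def, pv3 α β, pv1 α β i hia] at h2
        omega
      · rcases Nat.lt_or_ge ((i:ℕ)) (a+b) with hib | hib
        · right
          set ix : Fin b := ⟨(i:ℕ)-a, by omega⟩ with hix
          refine ⟨ix, ?_, by apply Fin.ext; show a + ((i:ℕ)-a) = (i:ℕ); omega⟩
          intro l hl
          rw [Fin.lt_def] at hl
          have hl' : (i:ℕ) - a < (l:ℕ) := hl
          have hj : i < midEmb a b l := by
            rw [Fin.lt_def, midEmb_val]; omega
          have h2 := hP _ hj
          rw [Fin.lt_def] at h2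
          have hvi : (π i : ℕ) = (β ix : ℕ) := pv2 α β i hia hib
          have hvl := hπemb l
          rw [Fin.lt_def]
          omega
        · left; apply Fin.ext; have := i.isLt; simp; omega
    · rintro (rfl | ⟨x, hQ, rfl⟩)
      · intro j hj
        rw [Fin.lt_def] at hj
        exfalso
        have := j.isLt
        simp at hj
        omega
      · intro j hj
        rw [Fin.lt_def] at hj ⊢
        rw [midEmb_val] at hj
        have hvx := hπemb x
        rcases Nat.lt_or_ge ((j:ℕ)) (a+b) with hjb | hjb
        · set jx : Fin b := ⟨(j:ℕ)-a, by omega⟩ with hjx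
          have hvj : (π j : ℕ) = (β jx : ℕ) := pv2 α β j (by omega) hjb
          have h2 := hQ jx (by rw [Fin.lt_def]; show (x:ℕ) < (j:ℕ)-a; omega)
          rw [Fin.lt_def] at h2
          omega
        · have hjv : j = (⟨a+b, by omega⟩ : Fin (a+(b+1))) := by
            apply Fin.ext; have := j.isLt; simp; omega
          rw [hjv, pv3 α β]
          have := (β x).isLt
          omega
  rw [rlmin, hset, Finset.card_insert_of_notMem, Finset.card_map, rlmin]
  simp only [mem_map, not_exists]
  intro x hx
  have h1 : ((midEmb a b x : Fin (a+(b+1))) : ℕ) = a + b := by rw [hx.2]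
  rw [midEmb_val] at h1
  have := x.isLt
  omega



lemma castPerm_symm_cancel {m n : ℕ} (h : m = n) (π : Equiv.Perm (Fin n)) :
    castPerm h (castPerm h.symm π) = π := by
  subst h; apply Equiv.ext; intro i; apply Fin.ext; rfl

lemma decomp {n : ℕ} (hn : 0 < n) (π : Equiv.Perm (Fin n)) (h132 : avoids132 π) :
    ∃ (a b : ℕ) (hab : a + (b+1) = n) (α : Equiv.Perm (Fin a)) (β : Equiv.Perm (Fin b)),
      avoids132 α ∧ avoids132 β ∧
        π = castPerm hab (ssum α (dsum β (1 : Equiv.Perm (Fin 1)))) := by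
  classical
  set last : Fin n := ⟨n-1, by omega⟩ with hlast
  have hlastval : (last : ℕ) = n - 1 := rfl
  set k := ((π last : Fin n) : ℕ) with hk
  have hkn : k < n := by rw [hk]; exact (π last).isLt
  set a := n - 1 - k with ha
  have han : a < n := by omega
  -- card of big set
  have hAcard : (Finset.univ.filter (fun i : Fin n => k < ((π i : Fin n) : ℕ))).card = a := by
    rw [card_filter_perm π (fun v : Fin n => k < (v:ℕ)), card_filter_val_gt hkn]
  -- big values form a prefix
  have hsub : (Finset.univ.filter (fun i : Fin n => k < ((π i : Fin n) : ℕ)))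
      ⊆ (Finset.univ.filter (fun i : Fin n => (i:ℕ) < a)) := by
    intro i hi
    simp only [mem_filter, mem_univ, true_and] at hi ⊢
    by_contra hcon
    push_neg at hcon
    have hine : (i:ℕ) < n - 1 := by
      rcases Nat.lt_or_ge ((i:ℕ)) (n-1) with h | h
      · exact h
      · exfalso
        have hieq : i = last := Fin.ext (by rw [hlastval]; have := i.isLt; omega)
        rw [hieq] at hi
        omega
    have hsub2 : (Finset.univ.filter (fun j : Fin n => (j:ℕ) ≤ (i:ℕ)))
        ⊆ (Finset.univ.filter (fun j : Fin n => k < ((π j : Fin n) : ℕ))) := by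
      intro j hj
      simp only [mem_filter, mem_univ, true_and] at hj ⊢
      rcases Nat.lt_or_ge ((j:ℕ)) ((i:ℕ)) with hji | hji
      · have hjne : j ≠ last := by
          intro e
          rw [e, hlastval] at hj
          omega
        have hvne : ((π j : Fin n) : ℕ) ≠ k := by
          intro e
          exact hjne (π.injective (Fin.ext (e.trans hk)))
        rcases Nat.lt_or_ge (((π j : Fin n)) : ℕ) k with hlt | hge
        · exfalso
          apply h132
          refine ⟨j, i, last, ?_, ?_, ?_, ?_⟩
          · rw [Fin.lt_def]; omega
          · rw [Fin.lt_def, hlastval]; omega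
          · rw [Fin.lt_def]; omega
          · rw [Fin.lt_def]; omega
        · omega
      · have : j = i := Fin.ext (by omega)
        rw [this]; exact hi
    have hc1 := Finset.card_le_card hsub2
    rw [card_filter_val_le, hAcard] at hc1
    omega
  have heq := Finset.eq_of_subset_of_card_le hsub
    (by rw [hAcard, card_filter_val_lt han])
  have hbig : ∀ i : Fin n, (i:ℕ) < a ↔ k < ((π i : Fin n) : ℕ) := by
    intro i
    constructor
    · intro h
      have hm : i ∈ Finset.univ.filter (fun i : Fin n => (i:ℕ) < a) := by
        simp only [mem_filter, mem_univ, true_and]; exact h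
      rw [← heq] at hm
      simpa using hm
    · intro h
      have hm : i ∈ Finset.univ.filter (fun i : Fin n => k < ((π i : Fin n) : ℕ)) := by
        simp only [mem_filter, mem_univ, true_and]; exact h
      rw [heq] at hm
      simpa using hm
  have hsmall : ∀ i : Fin n, a ≤ (i:ℕ) → (i:ℕ) < n-1 → ((π i : Fin n) : ℕ) < k := by
    intro i h1 h2
    have h3 : ¬ k < ((π i : Fin n) : ℕ) := fun hc => by
      have := (hbig i).mpr hc; omega
    have h4 : ((π i : Fin n) : ℕ) ≠ k := by
      intro e
      have : i = last := π.injective (Fin.ext (e.trans hk))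
      rw [this, hlastval] at h2
      omega
    omega
  have hab : a + (k + 1) = n := by omega
  -- construct α
  obtain ⟨f, hf⟩ : ∃ f : Fin a → Fin a, ∀ (j : Fin n) (hj : (j:ℕ) < a),
      (k+1) + ((f ⟨(j:ℕ), hj⟩ : Fin a) : ℕ) = ((π j : Fin n) : ℕ) := by
    have key : ∀ x : Fin a, ((π ⟨(x:ℕ), by omega⟩ : Fin n) : ℕ) - (k+1) < a := by
      intro x
      have h1 : k < ((π ⟨(x:ℕ), by omega⟩ : Fin n) : ℕ) :=
        (hbig ⟨(x:ℕ), by omega⟩).mp x.isLt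
      have h2 := (π (⟨(x:ℕ), by omega⟩ : Fin n)).isLt
      omega
    refine ⟨fun x => ⟨((π ⟨(x:ℕ), by omega⟩ : Fin n) : ℕ) - (k+1), key x⟩, ?_⟩
    intro j hj
    show (k+1) + (((π ⟨(j:ℕ), by omega⟩ : Fin n) : ℕ) - (k+1)) = ((π j : Fin n) : ℕ)
    have e : (⟨(j:ℕ), by omega⟩ : Fin n) = j := Fin.ext rfl
    rw [e]
    have h1 : k < ((π j : Fin n) : ℕ) := (hbig j).mp hj
    omega
  have hfinj : Function.Injective f := by
    intro x y hxy
    have hx' : ((x:ℕ)) < n := by omega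
    have hy' : ((y:ℕ)) < n := by omega
    have e1 : (k+1) + ((f x : Fin a) : ℕ) = ((π ⟨(x:ℕ), hx'⟩ : Fin n) : ℕ) :=
      hf ⟨(x:ℕ), hx'⟩ x.isLt
    have e2 : (k+1) + ((f y : Fin a) : ℕ) = ((π ⟨(y:ℕ), hy'⟩ : Fin n) : ℕ) :=
      hf ⟨(y:ℕ), hy'⟩ y.isLt
    have e3 : ((f x : Fin a) : ℕ) = ((f y : Fin a) : ℕ) := congrArg Fin.val hxy
    have e4 : (⟨(x:ℕ), hx'⟩ : Fin n) = (⟨(y:ℕ), hy'⟩ : Fin n) :=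
      π.injective (Fin.ext (by omega))
    have e5 : (x:ℕ) = (y:ℕ) := by simpa using e4
    exact Fin.ext e5
  have hfbij : Function.Bijective f := Finite.injective_iff_bijective.mp hfinj
  -- construct β
  obtain ⟨g, hg⟩ : ∃ g : Fin k → Fin k, ∀ (j : Fin n) (h1 : a ≤ (j:ℕ)) (h2 : (j:ℕ) < a + k),
      ((g ⟨(j:ℕ) - a, by omega⟩ : Fin k) : ℕ) = ((π j : Fin n) : ℕ) := by
    have key : ∀ x : Fin k, ((π ⟨a + (x:ℕ), by omega⟩ : Fin n) : ℕ) < k := by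
      intro x
      exact hsmall ⟨a + (x:ℕ), by omega⟩ (by show a ≤ a + (x:ℕ); omega)
        (by show a + (x:ℕ) < n - 1; omega)
    refine ⟨fun x => ⟨((π ⟨a + (x:ℕ), by omega⟩ : Fin n) : ℕ), key x⟩, ?_⟩
    intro j h1 h2
    show ((π ⟨a + ((j:ℕ) - a), by omega⟩ : Fin n) : ℕ) = ((π j : Fin n) : ℕ)
    have e : (⟨a + ((j:ℕ) - a), by omega⟩ : Fin n) = j := Fin.ext (by show a + ((j:ℕ) - a) = (j:ℕ); omega)
    rw [e]
  have hginj : Function.Injective g := by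
    intro x y hxy
    have hx' : a + (x:ℕ) < n := by omega
    have hy' : a + (y:ℕ) < n := by omega
    have e1 : ((g x : Fin k) : ℕ) = ((π ⟨a + (x:ℕ), hx'⟩ : Fin n) : ℕ) := by
      have e0 : (⟨((⟨a + (x:ℕ), hx'⟩ : Fin n) : ℕ) - a, by show a + (x:ℕ) - a < k; omega⟩ : Fin k) = x :=
        Fin.ext (by show (a + (x:ℕ)) - a = (x:ℕ); omega)
      have := hg ⟨a + (x:ℕ), hx'⟩ (by show a ≤ a + (x:ℕ); omega) (by show a + (x:ℕ) < a + k; omega)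
      rwa [e0] at this
    have e2 : ((g y : Fin k) : ℕ) = ((π ⟨a + (y:ℕ), hy'⟩ : Fin n) : ℕ) := by
      have e0 : (⟨((⟨a + (y:ℕ), hy'⟩ : Fin n) : ℕ) - a, by show a + (y:ℕ) - a < k; omega⟩ : Fin k) = y :=
        Fin.ext (by show (a + (y:ℕ)) - a = (y:ℕ); omega)
      have := hg ⟨a + (y:ℕ), hy'⟩ (by show a ≤ a + (y:ℕ); omega) (by show a + (y:ℕ) < a + k; omega)
      rwa [e0] at this
    have e3 : ((g x : Fin k) : ℕ) = ((g y : Fin k) : ℕ) := congrArg Fin.val hxy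
    have e4 : (⟨a + (x:ℕ), hx'⟩ : Fin n) = (⟨a + (y:ℕ), hy'⟩ : Fin n) :=
      π.injective (Fin.ext (by omega))
    have e5 : a + (x:ℕ) = a + (y:ℕ) := by simpa using e4
    exact Fin.ext (by omega)
  have hgbij : Function.Bijective g := Finite.injective_iff_bijective.mp hginj
  refine ⟨a, k, hab, Equiv.ofBijective f hfbij, Equiv.ofBijective g hgbij, ?_, ?_, ?_⟩
  · -- avoids132 α
    rintro ⟨x, y, z, hxy, hyz, hv1, hv2⟩
    apply h132
    have hx' : ((x:ℕ)) < n := by omega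
    have hy' : ((y:ℕ)) < n := by omega
    have hz' : ((z:ℕ)) < n := by omega
    have e1 : (k+1) + ((f x : Fin a) : ℕ) = ((π ⟨(x:ℕ), hx'⟩ : Fin n) : ℕ) :=
      hf ⟨(x:ℕ), hx'⟩ x.isLt
    have e2 : (k+1) + ((f y : Fin a) : ℕ) = ((π ⟨(y:ℕ), hy'⟩ : Fin n) : ℕ) :=
      hf ⟨(y:ℕ), hy'⟩ y.isLt
    have e3 : (k+1) + ((f z : Fin a) : ℕ) = ((π ⟨(z:ℕ), hz'⟩ : Fin n) : ℕ) :=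
      hf ⟨(z:ℕ), hz'⟩ z.isLt
    have hv1' : ((f x : Fin a) : ℕ) < ((f z : Fin a) : ℕ) := hv1
    have hv2' : ((f z : Fin a) : ℕ) < ((f y : Fin a) : ℕ) := hv2
    have hxy' : (x:ℕ) < (y:ℕ) := hxy
    have hyz' : (y:ℕ) < (z:ℕ) := hyz
    refine ⟨⟨(x:ℕ), hx'⟩, ⟨(y:ℕ), hy'⟩, ⟨(z:ℕ), hz'⟩, ?_, ?_, ?_, ?_⟩
    · rw [Fin.lt_def]; show (x:ℕ) < (y:ℕ); omega
    · rw [Fin.lt_def]; show (y:ℕ) < (z:ℕ); omega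
    · rw [Fin.lt_def]; omega
    · rw [Fin.lt_def]; omega
  · -- avoids132 β
    rintro ⟨x, y, z, hxy, hyz, hv1, hv2⟩
    apply h132
    have hx' : a + (x:ℕ) < n := by omega
    have hy' : a + (y:ℕ) < n := by omega
    have hz' : a + (z:ℕ) < n := by omega
    have e1 : ((g x : Fin k) : ℕ) = ((π ⟨a + (x:ℕ), hx'⟩ : Fin n) : ℕ) := by
      have e0 : (⟨((⟨a + (x:ℕ), hx'⟩ : Fin n) : ℕ) - a, by show a + (x:ℕ) - a < k; omega⟩ : Fin k) = x :=
        Fin.ext (by show (a + (x:ℕ)) - a = (x:ℕ); omega)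
      have := hg ⟨a + (x:ℕ), hx'⟩ (by show a ≤ a + (x:ℕ); omega) (by show a + (x:ℕ) < a + k; omega)
      rwa [e0] at this
    have e2 : ((g y : Fin k) : ℕ) = ((π ⟨a + (y:ℕ), hy'⟩ : Fin n) : ℕ) := by
      have e0 : (⟨((⟨a + (y:ℕ), hy'⟩ : Fin n) : ℕ) - a, by show a + (y:ℕ) - a < k; omega⟩ : Fin k) = y :=
        Fin.ext (by show (a + (y:ℕ)) - a = (y:ℕ); omega)
      have := hg ⟨a + (y:ℕ), hy'⟩ (by show a ≤ a + (y:ℕ); omega) (by show a + (y:ℕ) < a + k; omega)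
      rwa [e0] at this
    have e3 : ((g z : Fin k) : ℕ) = ((π ⟨a + (z:ℕ), hz'⟩ : Fin n) : ℕ) := by
      have e0 : (⟨((⟨a + (z:ℕ), hz'⟩ : Fin n) : ℕ) - a, by show a + (z:ℕ) - a < k; omega⟩ : Fin k) = z :=
        Fin.ext (by show (a + (z:ℕ)) - a = (z:ℕ); omega)
      have := hg ⟨a + (z:ℕ), hz'⟩ (by show a ≤ a + (z:ℕ); omega) (by show a + (z:ℕ) < a + k; omega)
      rwa [e0] at this
    have hv1' : ((g x : Fin k) : ℕ) < ((g z : Fin k) : ℕ) := hv1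
    have hv2' : ((g z : Fin k) : ℕ) < ((g y : Fin k) : ℕ) := hv2
    have hxy' : (x:ℕ) < (y:ℕ) := hxy
    have hyz' : (y:ℕ) < (z:ℕ) := hyz
    refine ⟨⟨a + (x:ℕ), hx'⟩, ⟨a + (y:ℕ), hy'⟩, ⟨a + (z:ℕ), hz'⟩, ?_, ?_, ?_, ?_⟩
    · rw [Fin.lt_def]; show a + (x:ℕ) < a + (y:ℕ); omega
    · rw [Fin.lt_def]; show a + (y:ℕ) < a + (z:ℕ); omega
    · rw [Fin.lt_def]; omega
    · rw [Fin.lt_def]; omega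
  · -- the equality
    have main : ssum (Equiv.ofBijective f hfbij) (dsum (Equiv.ofBijective g hgbij)
        (1 : Equiv.Perm (Fin 1))) = castPerm hab.symm π := by
      apply Equiv.ext
      intro i
      apply Fin.ext
      rw [castPerm_val hab.symm π i]
      rcases Nat.lt_or_ge ((i:ℕ)) a with h | h
      · rw [pv1 (Equiv.ofBijective f hfbij) (Equiv.ofBijective g hgbij) i h]
        exact hf ⟨(i:ℕ), by omega⟩ h
      · rcases Nat.lt_or_ge ((i:ℕ)) (a + k) with h2 | h2
        · rw [pv2 (Equiv.ofBijective f hfbij) (Equiv.ofBijective g hgbij) i h h2]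
          exact hg ⟨(i:ℕ), by omega⟩ h h2
        · have h3 : (i:ℕ) = a + k := by omega
          have hi : i = (⟨a + k, by omega⟩ : Fin (a + (k+1))) := Fin.ext h3
          have hval : ((ssum (Equiv.ofBijective f hfbij) (dsum (Equiv.ofBijective g hgbij)
              (1 : Equiv.Perm (Fin 1))) i : Fin (a+(k+1))) : ℕ) = k := by
            rw [hi]
            exact pv3 (Equiv.ofBijective f hfbij) (Equiv.ofBijective g hgbij)
          rw [hval]
          have e2 : (⟨(i:ℕ), by omega⟩ : Fin n) = last := by
            apply Fin.ext
            show (i:ℕ) = (last:ℕ)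
            rw [hlastval]
            omega
          rw [e2]
    rw [main, castPerm_symm_cancel]


theorem stmt5
    (φ : ∀ n : ℕ, Equiv.Perm (Fin n) → Equiv.Perm (Fin n))
    (hrec : ∀ (a b : ℕ) (α : Equiv.Perm (Fin a)) (β : Equiv.Perm (Fin b)),
      avoids132 α → avoids132 β →
      φ (a + (b + 1)) (ssum α (dsum β (1 : Equiv.Perm (Fin 1)))) =
        castPerm (show b + (a + 1) = a + (b + 1) by omega)
          (ssum (φ b β) (dsum (φ a α) (1 : Equiv.Perm (Fin 1))))) :
    ∀ (n : ℕ) (π : Equiv.Perm (Fin n)), avoids132 π →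
      rlmax π = rlmin (φ n π) ∧ rlmin π = rlmax (φ n π) := by
  intro n
  induction n using Nat.strong_induction_on with
  | _ n ih =>
    intro π hπ
    rcases Nat.eq_zero_or_pos n with rfl | hn
    · constructor <;> simp [rlmax, rlmin]
    · obtain ⟨a, b, hab, α, β, hα, hβ, hdec⟩ := decomp hn π hπ
      subst hab
      rw [castPerm_rfl] at hdec
      subst hdec
      rw [hrec a b α β hα hβ]
      constructor
      · rw [rlmax_ssum α β, rlmin_castPerm, rlmin_ssum]
        have := (ih a (by omega) α hα).1
        omega
      · rw [rlmin_ssum α β, rlmax_castPerm, rlmax_ssum]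
        have := (ih b (by omega) β hβ).2
        omega
end

section
/- The multistatistics (\underline{23}-1, 3-\underline{12}, des) and (3-\underline{12}, \underline{23}-1, des) are equidistributed on S_n(132): for all a, b, c, the number of π ∈ S_n(132) with a occurrences of \underline{23}-1, b occurrences of 3-\underline{12}, and c descents equals the number of π ∈ S_n(132) with a occurrences of 3-\underline{12}, b occurrences of \underline{23}-1, and c descents. -/
open Equiv Finset

lemma inv_avoids132 {n : ℕ} {π : Equiv.Perm (Fin n)} (h : avoids132 π) :
    avoids132 π⁻¹ := by
  rintro ⟨i, j, k, hij, hjk, h1, h2⟩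
  exact h ⟨π⁻¹ i, π⁻¹ k, π⁻¹ j, h1, h2, by simpa using hij, by simpa using hjk⟩

lemma KA {n : ℕ} {π : Equiv.Perm (Fin n)} (h : avoids132 π) {a b' b : Fin n}
    (hab : a < b) (hb : (b' : ℕ) + 1 = b) (hv : (π b : ℕ) = (π a : ℕ) + 1) :
    π b' < π b := by
  have hle : a ≤ b' := by rw [Fin.le_def]; rw [Fin.lt_def] at hab; omega
  rcases eq_or_lt_of_le hle with he | hl
  · subst he; rw [Fin.lt_def]; omega
  · by_contra hc
    push_neg at hc
    have hne : π b ≠ π b' := fun he => by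
      have hq : b = b' := π.injective he
      rw [Fin.lt_def] at hl; rw [hq] at hb; omega
    exact h ⟨a, b', b, hl, by rw [Fin.lt_def]; omega, by rw [Fin.lt_def]; omega,
      lt_of_le_of_ne hc hne⟩

lemma KB {n : ℕ} {π : Equiv.Perm (Fin n)} (h : avoids132 π) {j j' u : Fin n}
    (hjj : (j : ℕ) + 1 = j') (hasc : π j < π j') (hu : (π j' : ℕ) = (u : ℕ) + 1) :
    π⁻¹ u < j' := by
  set a := π⁻¹ u with ha
  have hpa : π a = u := by simp [ha]
  rcases lt_trichotomy a j' with hl | he | hg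
  · exact hl
  · exfalso; rw [he] at hpa; rw [Fin.lt_def] at hasc; omega
  · exfalso
    have hja : π j ≠ u := fun he2 => by
      have hq : j = a := π.injective (by rw [hpa, he2])
      rw [Fin.lt_def] at hg; rw [hq] at hjj; omega
    refine h ⟨j, j', a, by rw [Fin.lt_def]; omega, hg, ?_, ?_⟩ <;>
      · rw [Fin.lt_def] at *; rw [hpa]; omega

lemma KC {n : ℕ} {π : Equiv.Perm (Fin n)} (h : avoids132 π) {i j' a : Fin n}
    (hij : i < j') (hu : (π j' : ℕ) = (π a : ℕ) + 1) (hlt : π j' < π i) : i < a := by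
  rcases lt_trichotomy a i with hl | he | hg
  · exact absurd (h ⟨a, i, j', hl, hij, by rw [Fin.lt_def]; omega, hlt⟩) not_false
  · exfalso; rw [he] at hu; rw [Fin.lt_def] at hlt; omega
  · exact hg

lemma asc_card {n : ℕ} {π : Equiv.Perm (Fin n)} (h : avoids132 π) :
    (Finset.univ.filter (fun p : Fin n × Fin n =>
      (p.1 : ℕ) + 1 = (p.2 : ℕ) ∧ π⁻¹ p.1 < π⁻¹ p.2)).card =
    (Finset.univ.filter (fun p : Fin n × Fin n =>
      (p.1 : ℕ) + 1 = (p.2 : ℕ) ∧ π p.1 < π p.2)).card := by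
  refine Finset.card_nbij'
    (fun p => (⟨(π⁻¹ p.2 : ℕ) - 1, Nat.lt_of_le_of_lt (Nat.sub_le _ _) (Fin.is_lt _)⟩,
      π⁻¹ p.2))
    (fun p => (⟨(π p.2 : ℕ) - 1, Nat.lt_of_le_of_lt (Nat.sub_le _ _) (Fin.is_lt _)⟩,
      π p.2)) ?_ ?_ ?_ ?_
  · rintro ⟨u, v⟩ hm
    simp only [Finset.coe_filter, Set.mem_setOf_eq, Finset.mem_filter, Finset.mem_univ, true_and] at hm ⊢
    obtain ⟨h1, h2⟩ := hm
    have hb1 : 1 ≤ (π⁻¹ v : ℕ) := by rw [Fin.lt_def] at h2; omega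
    refine ⟨by show (π⁻¹ v : ℕ) - 1 + 1 = (π⁻¹ v : ℕ); omega, ?_⟩
    exact KA h h2 (by show (π⁻¹ v : ℕ) - 1 + 1 = (π⁻¹ v : ℕ); omega) (by simp [h1.symm])
  · rintro ⟨i, j⟩ hm
    simp only [Finset.coe_filter, Set.mem_setOf_eq, Finset.mem_filter, Finset.mem_univ, true_and] at hm ⊢
    obtain ⟨h1, h2⟩ := hm
    have hb1 : 1 ≤ (π j : ℕ) := by rw [Fin.lt_def] at h2; omega
    refine ⟨by show (π j : ℕ) - 1 + 1 = (π j : ℕ); omega, ?_⟩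
    have := KB h h1 h2 (u := ⟨(π j : ℕ) - 1,
      Nat.lt_of_le_of_lt (Nat.sub_le _ _) (Fin.is_lt _)⟩)
      (by show (π j : ℕ) = (π j : ℕ) - 1 + 1; omega)
    simpa using this
  · rintro ⟨u, v⟩ hm
    simp only [Finset.coe_filter, Set.mem_setOf_eq, Finset.mem_filter, Finset.mem_univ, true_and] at hm
    obtain ⟨h1, h2⟩ := hm
    ext <;> simp <;> omega
  · rintro ⟨i, j⟩ hm
    simp only [Finset.coe_filter, Set.mem_setOf_eq, Finset.mem_filter, Finset.mem_univ, true_and] at hm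
    obtain ⟨h1, h2⟩ := hm
    ext <;> simp <;> omega

lemma split_card {n : ℕ} (σ : Equiv.Perm (Fin n)) :
    (Finset.univ.filter (fun p : Fin n × Fin n =>
      (p.1 : ℕ) + 1 = (p.2 : ℕ) ∧ σ p.2 < σ p.1)).card +
    (Finset.univ.filter (fun p : Fin n × Fin n =>
      (p.1 : ℕ) + 1 = (p.2 : ℕ) ∧ σ p.1 < σ p.2)).card =
    (Finset.univ.filter (fun p : Fin n × Fin n =>
      (p.1 : ℕ) + 1 = (p.2 : ℕ))).card := by
  have key := Finset.card_filter_add_card_filter_not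
    (s := Finset.univ.filter (fun p : Fin n × Fin n => (p.1 : ℕ) + 1 = (p.2 : ℕ)))
    (p := fun p => σ p.2 < σ p.1)
  rw [Finset.filter_filter, Finset.filter_filter] at key
  rw [← key]
  congr 1
  apply congr_arg
  apply Finset.filter_congr
  rintro ⟨i, j⟩ _
  dsimp only
  constructor
  · rintro ⟨h1, h2⟩
    refine ⟨h1, fun hc => ?_⟩
    rw [Fin.lt_def] at h2 hc; omega
  · rintro ⟨h1, h2⟩
    refine ⟨h1, ?_⟩
    have hne : σ i ≠ σ j := fun he => by
      have := σ.injective he; rw [this] at h1; omega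
    rcases lt_or_gt_of_ne hne with hl | hg
    · exact hl
    · exact absurd hg h2

lemma des_inv {n : ℕ} {π : Equiv.Perm (Fin n)} (h : avoids132 π) :
    des π⁻¹ = des π := by
  have h1 := split_card π⁻¹
  have h2 := split_card π
  have h3 := asc_card h
  unfold des
  omega

lemma occ_inv {n : ℕ} {π : Equiv.Perm (Fin n)} (h : avoids132 π) :
    occ23_1 π⁻¹ = occ3_12 π := by
  unfold occ23_1 occ3_12
  refine Finset.card_nbij'
    (fun p => (π⁻¹ p.2.2, (⟨(π⁻¹ p.2.1 : ℕ) - 1,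
      Nat.lt_of_le_of_lt (Nat.sub_le _ _) (Fin.is_lt _)⟩, π⁻¹ p.2.1)))
    (fun q => (⟨(π q.2.2 : ℕ) - 1,
      Nat.lt_of_le_of_lt (Nat.sub_le _ _) (Fin.is_lt _)⟩, (π q.2.2, π q.1))) ?_ ?_ ?_ ?_
  · rintro ⟨u, v, w⟩ hm
    simp only [Finset.coe_filter, Set.mem_setOf_eq, Finset.mem_filter, Finset.mem_univ, true_and] at hm ⊢
    obtain ⟨h1, h2, h3, h4⟩ := hm
    have hca : (π⁻¹ w : ℕ) < (π⁻¹ u : ℕ) := h3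
    have hab : (π⁻¹ u : ℕ) < (π⁻¹ v : ℕ) := h4
    refine ⟨?_, ?_, ?_, ?_⟩
    · rw [Fin.lt_def]; show (π⁻¹ w : ℕ) < (π⁻¹ v : ℕ) - 1; omega
    · show (π⁻¹ v : ℕ) - 1 + 1 = (π⁻¹ v : ℕ); omega
    · exact KA h h4 (by show (π⁻¹ v : ℕ) - 1 + 1 = (π⁻¹ v : ℕ); omega) (by simp [h1.symm])
    · simpa using h2
  · rintro ⟨i, jp, j'⟩ hm
    simp only [Finset.coe_filter, Set.mem_setOf_eq, Finset.mem_filter, Finset.mem_univ, true_and] at hm ⊢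
    obtain ⟨h1, h2, h3, h4⟩ := hm
    have hv1 : 1 ≤ (π j' : ℕ) := by rw [Fin.lt_def] at h3; omega
    set u' : Fin n := ⟨(π j' : ℕ) - 1,
      Nat.lt_of_le_of_lt (Nat.sub_le _ _) (Fin.is_lt _)⟩ with hu'
    have hu : (π j' : ℕ) = (π (π⁻¹ u') : ℕ) + 1 := by simp [hu']; omega
    refine ⟨?_, ?_, ?_, ?_⟩
    · show (u' : ℕ) + 1 = (π j' : ℕ); simp [hu']; omega
    · rw [Fin.lt_def]; exact h4
    · show π⁻¹ (π i) < π⁻¹ u'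
      simpa using KC h (lt_trans h1 (by rw [Fin.lt_def]; omega)) hu h4
    · show π⁻¹ u' < π⁻¹ (π j')
      simpa using KB h h2 h3 (u := u') (by simp [hu']; omega)
  · rintro ⟨u, v, w⟩ hm
    simp only [Finset.coe_filter, Set.mem_setOf_eq, Finset.mem_filter, Finset.mem_univ, true_and] at hm
    obtain ⟨h1, h2, h3, h4⟩ := hm
    refine Prod.ext ?_ (Prod.ext ?_ ?_)
    · ext; simp; omega
    · simp
    · simp
  · rintro ⟨i, jp, j'⟩ hm
    simp only [Finset.coe_filter, Set.mem_setOf_eq, Finset.mem_filter, Finset.mem_univ, true_and] at hm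
    obtain ⟨h1, h2, h3, h4⟩ := hm
    refine Prod.ext ?_ (Prod.ext ?_ ?_)
    · simp
    · ext; simp; omega
    · simp

lemma pack132 {n : ℕ} {π : Equiv.Perm (Fin n)} (h : avoids132 π) :
    avoids132 π⁻¹ ∧ occ3_12 π⁻¹ = occ23_1 π ∧ occ23_1 π⁻¹ = occ3_12 π ∧
      des π⁻¹ = des π := by
  refine ⟨inv_avoids132 h, ?_, occ_inv h, des_inv h⟩
  have := occ_inv (inv_avoids132 h)
  rw [inv_inv] at this
  exact this.symm

theorem stmt15 (n a b c : ℕ) :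
    Nat.card {π : Equiv.Perm (Fin n) // avoids132 π ∧
      occ23_1 π = a ∧ occ3_12 π = b ∧ des π = c} =
    Nat.card {π : Equiv.Perm (Fin n) // avoids132 π ∧
      occ3_12 π = a ∧ occ23_1 π = b ∧ des π = c} := by
  apply Nat.card_congr
  exact {
    toFun := fun x => ⟨x.1⁻¹, by
      obtain ⟨h0, h1, h2, h3⟩ := x.2
      obtain ⟨g0, g1, g2, g3⟩ := pack132 h0
      exact ⟨g0, g1.trans h1, g2.trans h2, g3.trans h3⟩⟩
    invFun := fun x => ⟨x.1⁻¹, by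
      obtain ⟨h0, h1, h2, h3⟩ := x.2
      obtain ⟨g0, g1, g2, g3⟩ := pack132 h0
      exact ⟨g0, g2.trans h1, g1.trans h2, g3.trans h3⟩⟩
    left_inv := fun x => Subtype.ext (inv_inv x.1)
    right_inv := fun x => Subtype.ext (inv_inv x.1) }
end
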